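/- (Lemma 3 of the paper) With S_{A,B} and its auxiliary arrays defined from R_{A,B}, the [r(1,j⊢):r(m,j⊣)]-banded HIS weight of R_{A,B}[f(i⊢,1):f(i⊣,n)] equals the [H⊢[j⊢]:H⊣[j⊣]]-banded LIS length of S_{A,B}[G⊢[i⊢]:G⊣[i⊣]]. -/

import Mathlib

/-- `hEnd S v` is `h⊣(v)`: the sum of the weights of the elements of the weighted
sequence `S` (value-weight pairs) whose value is at most `v`. -/
def hEnd (S : List (ℕ × ℕ)) (v : ℕ) : ℕ :=
  ((S.filter fun p => decide (p.1 ≤ v)).map Prod.snd).sum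

/-- Replace each weighted element `(v, w)` of `S` by the run of `w` consecutive
integers `h⊣(v) - w + 1, …, h⊣(v)`, in position order. -/
def blow (S : List (ℕ × ℕ)) : List ℕ :=
  S.flatMap fun p => List.range' (hEnd S p.1 - p.2 + 1) p.2


/-- The value `r(i,j) = (j-1)(2m-1) + i`. -/
def vr (m i j : ℕ) : ℕ := (j - 1) * (2 * m - 1) + i

/-- The value `r̃(i,j) = (j-1)(2m-1) - i + 2`. -/
def vrt (m i j : ℕ) : ℕ := (j - 1) * (2 * m - 1) - i + 2

/-- The weighted sequence `R_{A,B}` as a list of value-weight pairs, in position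
order: row block `i` consists of `r(i,1), …, r(i,n)` (weights `c - d(i,j)`) followed,
if `i < m`, by `r̃(i+1,n), …, r̃(i+1,2)` (weights `c`). -/
def Rw (m n c : ℕ) (d : ℕ → ℕ → ℕ) : List (ℕ × ℕ) :=
  (List.range m).flatMap fun i0 =>
    ((List.range n).map fun j0 => (vr m (i0 + 1) (j0 + 1), c - d (i0 + 1) (j0 + 1))) ++
      (if i0 + 1 < m then (List.range (n - 1)).map fun k => (vrt m (i0 + 2) (n - k), c)
       else [])

/-- The DTW distance sequence `S_{A,B}`, obtained by blowing up each element of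
`R_{A,B}` into its run of consecutive integers. -/
def Sseq (m n c : ℕ) (d : ℕ → ℕ → ℕ) : List ℕ := blow (Rw m n c d)

/-- The contiguous listSeg of `L` from (1-based) position `a` through position `b`. -/
def listSeg {α : Type*} (L : List α) (a b : ℕ) : List α := (L.drop (a - 1)).take (b + 1 - a)

/-- `G⊢[i] = g⊢(r(i,1))`: start position in `S_{A,B}` of the run of `r(i,1)`. -/
def Gl (m n c : ℕ) (d : ℕ → ℕ → ℕ) (i : ℕ) : ℕ :=
  (((Rw m n c d).take ((i - 1) * (2 * n - 1))).map Prod.snd).sum + 1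

/-- `G⊣[i] = g⊣(r(i,n))`: end position in `S_{A,B}` of the run of `r(i,n)`. -/
def Gr (m n c : ℕ) (d : ℕ → ℕ → ℕ) (i : ℕ) : ℕ :=
  (((Rw m n c d).take ((i - 1) * (2 * n - 1) + n)).map Prod.snd).sum

/-- `H⊢[j] = h⊢(r(1,j))`: first value of the run of `r(1,j)`. -/
def Hl (m n c : ℕ) (d : ℕ → ℕ → ℕ) (j : ℕ) : ℕ :=
  hEnd (Rw m n c d) (vr m 1 j) - (c - d 1 j) + 1

/-- `H⊣[j] = h⊣(r(m,j))`: last value of the run of `r(m,j)`. -/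
def Hr (m n c : ℕ) (d : ℕ → ℕ → ℕ) (j : ℕ) : ℕ :=
  hEnd (Rw m n c d) (vr m m j)

/-- The `[lo:hi]`-banded LIS length of an integer sequence. -/
noncomputable def bandLIS (lo hi : ℕ) (L : List ℕ) : ℕ :=
  sSup {x | ∃ T : List ℕ, T.Sublist L ∧ T.Chain' (· < ·) ∧
    (∀ v ∈ T, lo ≤ v ∧ v ≤ hi) ∧ x = T.length}

/-- The `[lo:hi]`-banded HIS weight of a weighted integer sequence. -/
noncomputable def bandHISw (lo hi : ℕ) (L : List (ℕ × ℕ)) : ℕ :=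
  sSup {x | ∃ T : List (ℕ × ℕ), T.Sublist L ∧ (T.map Prod.fst).Chain' (· < ·) ∧
    (∀ p ∈ T, lo ≤ p.1 ∧ p.1 ≤ hi) ∧ x = (T.map Prod.snd).sum}



section FinalSection
open List

private lemma hEnd_eq_sum (R : List (ℕ × ℕ)) (v : ℕ) :
    hEnd R v = (R.map fun p => if p.1 ≤ v then p.2 else 0).sum := by
  induction R with
  | nil => rfl
  | cons p R ih =>
    simp only [hEnd, filter_cons] at *
    by_cases h : p.1 ≤ v <;> simp [h, ih]

private lemma hEnd_mono (R : List (ℕ × ℕ)) {u v : ℕ} (h : u ≤ v) : hEnd R u ≤ hEnd R v := by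
  rw [hEnd_eq_sum, hEnd_eq_sum]
  apply List.sum_le_sum
  intro p _
  by_cases h1 : p.1 ≤ u
  · simp [h1, h1.trans h]
  · simp [h1]

private lemma weight_le_hEnd {R : List (ℕ × ℕ)} {p : ℕ × ℕ} (hp : p ∈ R) :
    p.2 ≤ hEnd R p.1 := by
  obtain ⟨s, t, rfl⟩ := List.append_of_mem hp
  rw [hEnd_eq_sum]
  simp only [map_append, map_cons, sum_append, sum_cons, le_refl, if_pos]
  omega

private lemma hEnd_add_le {R : List (ℕ × ℕ)} {p : ℕ × ℕ} {u : ℕ}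
    (hp : p ∈ R) (hu : u < p.1) : hEnd R u + p.2 ≤ hEnd R p.1 := by
  obtain ⟨s, t, rfl⟩ := List.append_of_mem hp
  rw [hEnd_eq_sum, hEnd_eq_sum]
  simp only [map_append, map_cons, sum_append, sum_cons]
  have hs := List.sum_le_sum (l := s)
    (f := fun q : ℕ × ℕ => if q.1 ≤ u then q.2 else 0)
    (g := fun q : ℕ × ℕ => if q.1 ≤ p.1 then q.2 else 0) ?_
  have ht := List.sum_le_sum (l := t)
    (f := fun q : ℕ × ℕ => if q.1 ≤ u then q.2 else 0)
    (g := fun q : ℕ × ℕ => if q.1 ≤ p.1 then q.2 else 0) ?_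
  · have h1 : (if p.1 ≤ u then p.2 else 0) = 0 := by simp; omega
    have h2 : (if p.1 ≤ p.1 then p.2 else 0) = p.2 := by simp
    omega
  all_goals
    intro q _
    by_cases h1 : q.1 ≤ u
    · simp [h1, h1.trans (le_of_lt hu)]
    · simp [h1]

private lemma sublist_flatMap' {α β : Type*} {l₁ l₂ : List α} (h : l₁.Sublist l₂)
    (f : α → List β) : (l₁.flatMap f).Sublist (l₂.flatMap f) := by
  induction h with
  | slnil => simp
  | cons a h ih => rw [flatMap_cons]; exact ih.trans (sublist_append_right _ _)
  | cons_cons a h ih => rw [flatMap_cons, flatMap_cons]; exact (Sublist.refl _).append ih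

private lemma dir2 (R : List (ℕ × ℕ)) (hnd : (R.map Prod.fst).Nodup)
    (M : List (ℕ × ℕ)) (hMR : M.Sublist R) :
    ∀ (U : List ℕ), U.Sublist (M.flatMap fun p => List.range' (hEnd R p.1 - p.2 + 1) p.2) →
      U.Pairwise (· < ·) →
      ∃ T : List (ℕ × ℕ), T.Sublist M ∧ (T.map Prod.fst).Pairwise (· < ·) ∧
        U.length ≤ (T.map Prod.snd).sum ∧
        ∀ q ∈ T, ∃ u ∈ U, hEnd R q.1 - q.2 < u ∧ u ≤ hEnd R q.1 := by
  induction M with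
  | nil =>
    intro U hU _
    rw [flatMap_nil, sublist_nil] at hU
    exact ⟨[], Sublist.refl _, by simp, by simp [hU], by simp⟩
  | cons p M' ih =>
    intro U hU hUp
    have hM'R : M'.Sublist R := (sublist_cons_self p M').trans hMR
    rw [flatMap_cons] at hU
    obtain ⟨U1, U2, rfl, hU1, hU2⟩ := sublist_append_iff.mp hU
    obtain ⟨T2, hT2s, hT2p, hT2len, hT2w⟩ :=
      ih hM'R U2 hU2 (hUp.sublist (sublist_append_right _ _))
    cases U1 with
    | nil =>
      exact ⟨T2, hT2s.trans (sublist_cons_self p M'), hT2p, by simpa using hT2len,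
        fun q hq => by
          obtain ⟨u, hu, h1, h2⟩ := hT2w q hq
          exact ⟨u, by simp [hu], h1, h2⟩⟩
    | cons x U1' =>
      have hpR : p ∈ R := hMR.subset mem_cons_self
      have hpw : p.2 ≤ hEnd R p.1 := weight_le_hEnd hpR
      have hx : x ∈ List.range' (hEnd R p.1 - p.2 + 1) p.2 :=
        hU1.subset mem_cons_self
      rw [mem_range'_1] at hx
      have hxb : hEnd R p.1 - p.2 < x ∧ x ≤ hEnd R p.1 := by omega
      have hcross : ∀ u ∈ U2, x < u := fun u hu =>
        (pairwise_append.mp hUp).2.2 x mem_cons_self u hu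
      have hlt : ∀ q ∈ T2, p.1 < q.1 := by
        intro q hq
        obtain ⟨u, huU, hu1, hu2⟩ := hT2w q hq
        have hqM' : q ∈ M' := hT2s.subset hq
        have hqR : q ∈ R := hM'R.subset hqM'
        have hxu : x < u := hcross u huU
        rcases lt_trichotomy p.1 q.1 with h | h | h
        · exact h
        · exfalso
          have hnd2 : ((p :: M').map Prod.fst).Nodup := (hMR.map Prod.fst).nodup hnd
          rw [map_cons, nodup_cons] at hnd2
          exact hnd2.1 (h ▸ mem_map_of_mem (f := Prod.fst) hqM')
        · exfalso
          have := hEnd_add_le hpR h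
          omega
      refine ⟨p :: T2, hT2s.cons₂ p, ?_, ?_, ?_⟩
      · rw [map_cons, pairwise_cons]
        exact ⟨fun b hb => by
          obtain ⟨q, hq, rfl⟩ := mem_map.mp hb
          exact hlt q hq, hT2p⟩
      · have h1 : (x :: U1').length ≤ p.2 := by
          simpa using hU1.length_le
        simp only [length_append, map_cons, sum_cons]
        omega
      · intro q hq
        rcases mem_cons.mp hq with rfl | hq'
        · exact ⟨x, mem_append_left _ mem_cons_self, hxb.1, hxb.2⟩
        · obtain ⟨u, hu, h1, h2⟩ := hT2w q hq'
          exact ⟨u, mem_append_right _ hu, h1, h2⟩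

private lemma blow_band (R : List (ℕ × ℕ)) (hnd : (R.map Prod.fst).Nodup)
    (lo hi wlo whi : ℕ) (hloR : (lo, wlo) ∈ R) (hhiR : (hi, whi) ∈ R)
    (M : List (ℕ × ℕ)) (hM : M.Sublist R) :
    bandHISw lo hi M
      = bandLIS (hEnd R lo - wlo + 1) (hEnd R hi)
          (M.flatMap fun p => List.range' (hEnd R p.1 - p.2 + 1) p.2) := by
  have hne1 : {x | ∃ T : List (ℕ × ℕ), T.Sublist M ∧ (T.map Prod.fst).Chain' (· < ·) ∧
      (∀ p ∈ T, lo ≤ p.1 ∧ p.1 ≤ hi) ∧ x = (T.map Prod.snd).sum}.Nonempty :=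
    ⟨0, ⟨[], nil_sublist _, by exact List.IsChain.nil, by simp, by simp⟩⟩
  have hne2 : {x | ∃ T : List ℕ, T.Sublist (M.flatMap fun p => List.range' (hEnd R p.1 - p.2 + 1) p.2) ∧
      T.Chain' (· < ·) ∧ (∀ v ∈ T, hEnd R lo - wlo + 1 ≤ v ∧ v ≤ hEnd R hi) ∧
      x = T.length}.Nonempty :=
    ⟨0, ⟨[], nil_sublist _, by exact List.IsChain.nil, by simp, by simp⟩⟩
  have hbdd1 : BddAbove {x | ∃ T : List (ℕ × ℕ), T.Sublist M ∧ (T.map Prod.fst).Chain' (· < ·) ∧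
      (∀ p ∈ T, lo ≤ p.1 ∧ p.1 ≤ hi) ∧ x = (T.map Prod.snd).sum} := by
    refine ⟨(M.map Prod.snd).sum, ?_⟩
    rintro x ⟨T, hTs, -, -, rfl⟩
    exact (hTs.map Prod.snd).sum_le_sum (fun a _ => Nat.zero_le a)
  have hbdd2 : BddAbove {x | ∃ T : List ℕ, T.Sublist (M.flatMap fun p => List.range' (hEnd R p.1 - p.2 + 1) p.2) ∧
      T.Chain' (· < ·) ∧ (∀ v ∈ T, hEnd R lo - wlo + 1 ≤ v ∧ v ≤ hEnd R hi) ∧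
      x = T.length} := by
    refine ⟨(M.flatMap fun p => List.range' (hEnd R p.1 - p.2 + 1) p.2).length, ?_⟩
    rintro x ⟨T, hTs, -, -, rfl⟩
    exact hTs.length_le
  rw [bandHISw, bandLIS]
  apply _root_.le_antisymm
  · apply csSup_le hne1
    rintro x ⟨T, hTs, hTc, hTb, rfl⟩
    apply le_csSup hbdd2
    refine ⟨T.flatMap fun p => List.range' (hEnd R p.1 - p.2 + 1) p.2,
      sublist_flatMap' hTs _, ?_, ?_, ?_⟩
    · -- chain'
      have hTp : T.Pairwise fun p q => p.1 < q.1 := by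
        rw [← pairwise_map (f := Prod.fst)]
        exact isChain_iff_pairwise.mp hTc
      apply isChain_iff_pairwise.mpr; rw [pairwise_flatMap]
      refine ⟨fun p _ => pairwise_lt_range' 1 Nat.one_pos, ?_⟩
      refine hTp.imp_of_mem ?_
      intro p q hp hq hpq x hxm y hym
      have hqR : q ∈ R := hM.subset (hTs.subset hq)
      have hpR : p ∈ R := hM.subset (hTs.subset hp)
      have h2 : p.2 ≤ hEnd R p.1 := weight_le_hEnd hpR
      rw [mem_range'_1] at hxm hym
      have h1 := hEnd_add_le hqR hpq
      omega
    · -- band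
      intro v hv
      obtain ⟨p, hpT, hvm⟩ := mem_flatMap.mp hv
      rw [mem_range'_1] at hvm
      have hpR : p ∈ R := hM.subset (hTs.subset hpT)
      have hpw : p.2 ≤ hEnd R p.1 := weight_le_hEnd hpR
      obtain ⟨hlo, hhi⟩ := hTb p hpT
      constructor
      · rcases eq_or_lt_of_le hlo with h | h
        · have : (lo, wlo) = p := inj_on_of_nodup_map hnd hloR hpR (by simpa using h)
          have h2 : wlo = p.2 := by rw [← this]
          have h3 : hEnd R lo = hEnd R p.1 := by rw [← this]
          omega
        · have := hEnd_add_le hpR h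
          omega
      · have := hEnd_mono R hhi
        omega
    · -- length
      rw [length_flatMap]
      have he : (List.length ∘ fun p : ℕ × ℕ => List.range' (hEnd R p.1 - p.2 + 1) p.2)
          = Prod.snd := by
        funext p; simp
      simp
  · apply csSup_le hne2
    rintro x ⟨U, hUs, hUc, hUb, rfl⟩
    obtain ⟨T, hTs, hTp, hTlen, hTw⟩ := dir2 R hnd M hM U hUs (isChain_iff_pairwise.mp hUc)
    apply le_trans hTlen
    apply le_csSup hbdd1
    refine ⟨T, hTs, isChain_iff_pairwise.mpr hTp, ?_, rfl⟩
    intro q hq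
    obtain ⟨u, huU, h1, h2⟩ := hTw q hq
    obtain ⟨hb1, hb2⟩ := hUb u huU
    have hqR : q ∈ R := hM.subset (hTs.subset hq)
    constructor
    · by_contra h
      push_neg at h
      have h3 : hEnd R q.1 + wlo ≤ hEnd R lo := hEnd_add_le hloR h
      have h4 : wlo ≤ hEnd R lo := weight_le_hEnd hloR
      omega
    · by_contra h
      push_neg at h
      have h3 := hEnd_add_le hqR h
      omega

private lemma sub_cancel {i X Y : ℕ} (hX : i ≤ X) (hY : i ≤ Y) (h : X - i = Y - i) :
    X = Y := by omega

private lemma mul_pred (A q : ℕ) (hA : 1 ≤ A) : A * q = (A - 1) * q + q := by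
  cases A with
  | zero => omega
  | succ a => simp [Nat.succ_mul]

private lemma vr_val (m i0 j0 : ℕ) (hm : i0 < m) :
    vr m (i0 + 1) (j0 + 1) = j0 * (2 * m - 1) + (i0 + 1) ∧
      (vr m (i0 + 1) (j0 + 1) - 1) % (2 * m - 1) = i0 := by
  have h1 : vr m (i0 + 1) (j0 + 1) = j0 * (2 * m - 1) + (i0 + 1) := by
    simp [vr]
  refine ⟨h1, ?_⟩
  have h2 : vr m (i0 + 1) (j0 + 1) - 1 = i0 + j0 * (2 * m - 1) := by omega
  rw [h2, Nat.add_mul_mod_self_right]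
  exact Nat.mod_eq_of_lt (by omega)

private lemma vrt_val (m n k i0 : ℕ) (hm : i0 + 1 < m) (hk : k < n - 1) :
    vrt m (i0 + 2) (n - k) = (n - k - 1) * (2 * m - 1) - i0 ∧
      i0 + 2 ≤ (n - k - 1) * (2 * m - 1) ∧
      (vrt m (i0 + 2) (n - k) - 1) % (2 * m - 1) = 2 * m - 2 - i0 := by
  have h2 : 2 * m - 1 ≤ (n - k - 1) * (2 * m - 1) :=
    Nat.le_mul_of_pos_left _ (by omega)
  have hB : i0 + 2 ≤ (n - k - 1) * (2 * m - 1) := by omega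
  have harith : ∀ X : ℕ, i0 + 2 ≤ X → X - (i0 + 2) + 2 = X - i0 := fun X hX => by omega
  have hv : vrt m (i0 + 2) (n - k) = (n - k - 1) * (2 * m - 1) - i0 := by
    rw [vrt]; exact harith _ hB
  refine ⟨hv, hB, ?_⟩
  have h1 : (n - k - 1) * (2 * m - 1) = (n - k - 1 - 1) * (2 * m - 1) + (2 * m - 1) :=
    mul_pred _ _ (by omega)
  have h3 : vrt m (i0 + 2) (n - k) - 1 = (2 * m - 2 - i0) + (n - k - 1 - 1) * (2 * m - 1) := by
    rw [hv, h1]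
    generalize (n - k - 1 - 1) * (2 * m - 1) = Y
    omega
  rw [h3, Nat.add_mul_mod_self_right]
  exact Nat.mod_eq_of_lt (by omega)

private lemma Rw_nodup (m n c : ℕ) (d : ℕ → ℕ → ℕ) : ((Rw m n c d).map Prod.fst).Nodup := by
  rw [Rw, map_flatMap, nodup_flatMap]
  have hblock : ∀ i0, ((((List.range n).map fun j0 =>
        (vr m (i0 + 1) (j0 + 1), c - d (i0 + 1) (j0 + 1))) ++
        (if i0 + 1 < m then (List.range (n - 1)).map fun k => (vrt m (i0 + 2) (n - k), c)
         else [])).map Prod.fst)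
      = ((List.range n).map fun j0 => vr m (i0 + 1) (j0 + 1)) ++
        (if i0 + 1 < m then (List.range (n - 1)).map fun k => vrt m (i0 + 2) (n - k)
         else []) := by
    intro i0
    rw [map_append, map_map]
    congr 1
    split <;> simp
  constructor
  · intro i0 hi0
    rw [mem_range] at hi0
    rw [hblock, nodup_append]
    refine ⟨?_, ?_, ?_⟩
    · refine (nodup_range : (List.range n).Nodup).map_on ?_
      intro j0 h1 j0' h2 heq
      rw [(vr_val m i0 j0 hi0).1, (vr_val m i0 j0' hi0).1] at heq
      have : j0 * (2 * m - 1) = j0' * (2 * m - 1) := by omega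
      exact Nat.eq_of_mul_eq_mul_right (by omega) this
    · split
      · rename_i hm
        refine (nodup_range : (List.range (n - 1)).Nodup).map_on ?_
        intro k h1 k' h2 heq
        rw [mem_range] at h1 h2
        obtain ⟨e1, b1, -⟩ := vrt_val m n k i0 hm h1
        obtain ⟨e2, b2, -⟩ := vrt_val m n k' i0 hm h2
        rw [e1, e2] at heq
        have h3 : (n - k - 1) * (2 * m - 1) = (n - k' - 1) * (2 * m - 1) := by
          refine sub_cancel (by omega) (by omega) heq
        have h4 : n - k - 1 = n - k' - 1 := Nat.eq_of_mul_eq_mul_right (by omega) h3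
        omega
      · exact nodup_nil
    · intro v hv1 w hv2 hvw
      subst hvw
      obtain ⟨j0, hj0, rfl⟩ := mem_map.mp hv1
      rw [mem_range] at hj0
      split at hv2
      · rename_i hm
        obtain ⟨k, hk, heq⟩ := mem_map.mp hv2
        rw [mem_range] at hk
        obtain ⟨-, hmod1⟩ := vr_val m i0 j0 hi0
        obtain ⟨-, -, hmod2⟩ := vrt_val m n k i0 hm hk
        rw [heq] at hmod2
        omega
      · exact not_mem_nil hv2
  · have hdec : ∀ i0 < m, ∀ v ∈ ((((List.range n).map fun j0 =>
        (vr m (i0 + 1) (j0 + 1), c - d (i0 + 1) (j0 + 1))) ++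
        (if i0 + 1 < m then (List.range (n - 1)).map fun k => (vrt m (i0 + 2) (n - k), c)
         else [])).map Prod.fst),
        (if (v - 1) % (2 * m - 1) < m then (v - 1) % (2 * m - 1)
         else 2 * m - 2 - (v - 1) % (2 * m - 1)) = i0 := by
      intro i0 hi0 v hv
      rw [hblock, mem_append] at hv
      rcases hv with hv | hv
      · obtain ⟨j0, hj0, rfl⟩ := mem_map.mp hv
        obtain ⟨-, hmod⟩ := vr_val m i0 j0 hi0
        rw [hmod, if_pos hi0]
      · split at hv
        · rename_i hm
          obtain ⟨k, hk, rfl⟩ := mem_map.mp hv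
          rw [mem_range] at hk
          obtain ⟨-, -, hmod⟩ := vrt_val m n k i0 hm hk
          rw [hmod, if_neg (by omega)]
          omega
        · exact (not_mem_nil hv).elim
    refine (List.pairwise_lt_range : (List.range m).Pairwise (· < ·)).imp_of_mem ?_
    intro i0 i0' h1 h2 hlt v hv1 hv2
    rw [mem_range] at h1 h2
    have e1 := hdec i0 h1 v hv1
    have e2 := hdec i0' h2 v hv2
    omega

private lemma mem_Rw (m n c : ℕ) (d : ℕ → ℕ → ℕ) {i j : ℕ}
    (hi1 : 1 ≤ i) (him : i ≤ m) (hj1 : 1 ≤ j) (hjn : j ≤ n) :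
    (vr m i j, c - d i j) ∈ Rw m n c d := by
  rw [Rw, mem_flatMap]
  refine ⟨i - 1, by rw [mem_range]; omega, ?_⟩
  apply mem_append_left
  rw [mem_map]
  refine ⟨j - 1, by rw [mem_range]; omega, ?_⟩
  have e1 : i - 1 + 1 = i := by omega
  have e2 : j - 1 + 1 = j := by omega
  rw [e1, e2]

private lemma length_flatMap_rn (R0 L : List (ℕ × ℕ)) :
    (L.flatMap fun p => List.range' (hEnd R0 p.1 - p.2 + 1) p.2).length
      = (L.map Prod.snd).sum := by
  rw [List.length_flatMap]
  have he : (List.length ∘ fun p : ℕ × ℕ => List.range' (hEnd R0 p.1 - p.2 + 1) p.2)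
      = Prod.snd := by
    funext p; simp
  simp

private lemma seg_flatMap {α β : Type*} (f : α → List β) (P M Q R : List α)
    (hR : R = P ++ (M ++ Q)) (x y : ℕ)
    (hx : x = (P.flatMap f).length) (hy : y = (M.flatMap f).length) :
    ((R.flatMap f).drop x).take y = M.flatMap f := by
  subst hR hx hy
  rw [List.flatMap_append, List.flatMap_append, List.drop_left, List.take_left]

private lemma seg_blow (m n c : ℕ) (d : ℕ → ℕ → ℕ) (il ir : ℕ) (hii : il ≤ ir) :
    listSeg (Sseq m n c d) (Gl m n c d il) (Gr m n c d ir)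
      = (listSeg (Rw m n c d) ((il - 1) * (2 * n - 1) + 1) ((ir - 1) * (2 * n - 1) + n)).flatMap
          fun p => List.range' (hEnd (Rw m n c d) p.1 - p.2 + 1) p.2 := by
  set R := Rw m n c d with hRdef
  set a1 := (il - 1) * (2 * n - 1) with ha1
  set b := (ir - 1) * (2 * n - 1) + n with hb
  have hab : a1 ≤ b := by
    have : (il - 1) * (2 * n - 1) ≤ (ir - 1) * (2 * n - 1) :=
      Nat.mul_le_mul_right _ (by omega)
    omega
  set P := R.take a1 with hP
  set M := (R.drop a1).take (b - a1) with hM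
  set Q := (R.drop a1).drop (b - a1) with hQ
  have hMseg : M = listSeg R (a1 + 1) b := by
    rw [listSeg, hM, Nat.add_sub_cancel]
    congr 1
    omega
  have hPM : R.take b = P ++ M := by
    rw [show b = a1 + (b - a1) by omega, List.take_add]
  have hRsplit : R = P ++ (M ++ Q) := by
    rw [hP, hM, hQ, List.take_append_drop, List.take_append_drop]
  have hGl : Gl m n c d il - 1 = ((P.map Prod.snd).sum) := by
    rw [Gl, ← hRdef, ← ha1, ← hP]; omega
  have hGr : Gr m n c d ir = (P.map Prod.snd).sum + (M.map Prod.snd).sum := by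
    rw [Gr, ← hRdef, ← hb, hPM, map_append, sum_append]
  have hGl1 : 1 ≤ Gl m n c d il := by rw [Gl]; omega
  rw [listSeg, Sseq, ← hRdef, blow, ← hMseg]
  exact seg_flatMap _ P M Q R hRsplit _ _
    (by rw [length_flatMap_rn, hGl]) (by rw [length_flatMap_rn]; omega)


theorem banded_HIS_eq_banded_LIS (m n c : ℕ) (d : ℕ → ℕ → ℕ)
    (hd : ∀ i j, d i j ≤ c) (il ir jl jr : ℕ)
    (hil : 1 ≤ il) (hii : il ≤ ir) (him : ir ≤ m)
    (hjl : 1 ≤ jl) (hjj : jl ≤ jr) (hjn : jr ≤ n) :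
    bandHISw (vr m 1 jl) (vr m m jr)
        (listSeg (Rw m n c d) ((il - 1) * (2 * n - 1) + 1) ((ir - 1) * (2 * n - 1) + n)) =
      bandLIS (Hl m n c d jl) (Hr m n c d jr)
        (listSeg (Sseq m n c d) (Gl m n c d il) (Gr m n c d ir)) := by
  have hm1 : 1 ≤ m := le_trans hil (le_trans hii him)
  have hmemlo : (vr m 1 jl, c - d 1 jl) ∈ Rw m n c d :=
    mem_Rw m n c d le_rfl hm1 hjl (hjj.trans hjn)
  have hmemhi : (vr m m jr, c - d m jr) ∈ Rw m n c d :=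
    mem_Rw m n c d hm1 le_rfl (hjl.trans hjj) hjn
  rw [seg_blow m n c d il ir hii]
  have hMsub : (listSeg (Rw m n c d) ((il - 1) * (2 * n - 1) + 1)
      ((ir - 1) * (2 * n - 1) + n)).Sublist (Rw m n c d) := by
    rw [listSeg]
    exact (List.take_sublist _ _).trans (List.drop_sublist _ _)
  have h := blow_band (Rw m n c d) (Rw_nodup m n c d) (vr m 1 jl) (vr m m jr)
    (c - d 1 jl) (c - d m jr) hmemlo hmemhi _ hMsub
  rw [Hl, Hr]
  exact h

end FinalSection
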